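/- With the stiffness matrix entries z_{i,j} defined via the weighted left and right fractional integrals of the hat-function derivatives, the strictly lower-triangular entries satisfy, for every 3 ≤ i ≤ I−1 and 1 ≤ j ≤ i−2, z_{i,j} = ( b·γ·h^{λ−1} / Γ(λ+1) ) · [ ( (i−j+1/2)^λ − 2·(i−j−1/2)^λ + (i−j−3/2)^λ ) − ( (i−j+3/2)^λ − 2·(i−j+1/2)^λ + (i−j−1/2)^λ ) ]; in particular the right fractional integral contributes nothing to these entries. -/

import Mathlib

open MeasureTheory intervalIntegral Real

/-- Left fractional integral operator of order `lam` on `[0,1]`: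
`(I_L^λ f)(x) = (1/Γ(λ)) ∫_0^x (x−s)^{λ−1} f(s) ds`. -/
noncomputable def leftFracInt (lam : ℝ) (f : ℝ → ℝ) (x : ℝ) : ℝ :=
  (1 / Real.Gamma lam) * ∫ s in (0:ℝ)..x, (x - s) ^ (lam - 1) * f s

/-- Right fractional integral operator of order `lam` on `[0,1]`:
`(I_R^λ f)(x) = (1/Γ(λ)) ∫_x^1 (s−x)^{λ−1} f(s) ds`. -/
noncomputable def rightFracInt (lam : ℝ) (f : ℝ → ℝ) (x : ℝ) : ℝ :=
  (1 / Real.Gamma lam) * ∫ s in x..(1:ℝ), (s - x) ^ (lam - 1) * f s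

/-- The a.e. derivative `Dφ_j` of the hat function `φ_j` on a uniform grid with
spacing `h`: it equals `1/h` on `(x_{j-1}, x_j)`, `−1/h` on `(x_j, x_{j+1})`,
and `0` elsewhere, where `x_k = k·h`. -/
noncomputable def hatDeriv (h : ℝ) (j : ℕ) (s : ℝ) : ℝ :=
  if ((j : ℝ) - 1) * h < s ∧ s < (j : ℝ) * h then 1 / h
  else if (j : ℝ) * h < s ∧ s < ((j : ℝ) + 1) * h then -1 / h
  else 0

/-- The stiffness matrix entry
`z_{i,j} = b·[(γ I_L^λ + (1−γ) I_R^λ)(Dφ_j)(x_{i−1/2}) − (γ I_L^λ + (1−γ) I_R^λ)(Dφ_j)(x_{i+1/2})]`,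
where `x_{i±1/2} = (i ± 1/2)·h` are the midpoints of the grid cells. -/
noncomputable def stiff (lam gam b h : ℝ) (i j : ℕ) : ℝ :=
  b * ((gam * leftFracInt lam (hatDeriv h j) (((i : ℝ) - 1 / 2) * h)
          + (1 - gam) * rightFracInt lam (hatDeriv h j) (((i : ℝ) - 1 / 2) * h))
        - (gam * leftFracInt lam (hatDeriv h j) (((i : ℝ) + 1 / 2) * h)
          + (1 - gam) * rightFracInt lam (hatDeriv h j) (((i : ℝ) + 1 / 2) * h)))

lemma ker_integrable {lam : ℝ} (hlam : 0 < lam) (x a b : ℝ) :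
    IntervalIntegrable (fun s => (x - s) ^ (lam - 1)) volume a b := by
  simpa using (intervalIntegrable_rpow' (a := x - a) (b := x - b)
    (by linarith : (-1:ℝ) < lam - 1)).comp_sub_left x

lemma ker_int (lam : ℝ) (hlam : 0 < lam) (x a b : ℝ) :
    ∫ s in a..b, (x - s) ^ (lam - 1) = ((x - a) ^ lam - (x - b) ^ lam) / lam := by
  rw [intervalIntegral.integral_comp_sub_left (fun u => u ^ (lam - 1)) x,
      integral_rpow (Or.inl (by linarith : (-1:ℝ) < lam - 1))]
  norm_num

lemma ae_ne' (c : ℝ) : ∀ᵐ s : ℝ, s ≠ c := by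
  refine MeasureTheory.ae_iff.mpr ?_
  simp

lemma hat_zero_of_ge {h : ℝ} (hh : 0 < h) {j : ℕ} {s : ℝ} (hs : ((j:ℝ)+1)*h ≤ s) :
    hatDeriv h j s = 0 := by
  have hj1 : (j:ℝ)*h < ((j:ℝ)+1)*h := by nlinarith
  have hj2 : ((j:ℝ)-1)*h < (j:ℝ)*h := by nlinarith
  unfold hatDeriv
  rw [if_neg (by push_neg; intro _; linarith), if_neg (by push_neg; intro _; linarith)]

lemma hat_zero_of_le {h : ℝ} (hh : 0 < h) {j : ℕ} {s : ℝ} (hs : s ≤ ((j:ℝ)-1)*h) :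
    hatDeriv h j s = 0 := by
  have hj2 : ((j:ℝ)-1)*h < (j:ℝ)*h := by nlinarith
  unfold hatDeriv
  rw [if_neg (by push_neg; intro hc; linarith), if_neg (by push_neg; intro hc; linarith)]

lemma left_val (lam h : ℝ) (hlam : 0 < lam) (hh : 0 < h) (j : ℕ) (hj : 1 ≤ j)
    (x : ℝ) (hx : ((j:ℝ)+1)*h ≤ x) :
    ∫ s in (0:ℝ)..x, (x - s) ^ (lam - 1) * hatDeriv h j s
      = (1/h) * (((x - ((j:ℝ)-1)*h) ^ lam - 2*(x - (j:ℝ)*h) ^ lam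
          + (x - ((j:ℝ)+1)*h) ^ lam) / lam) := by
  set a := ((j:ℝ)-1)*h with ha
  set c := (j:ℝ)*h with hc
  set d := ((j:ℝ)+1)*h with hd
  have h0a : (0:ℝ) ≤ a := by
    have : (1:ℝ) ≤ (j:ℝ) := by exact_mod_cast hj
    have : (0:ℝ) ≤ (j:ℝ) - 1 := by linarith
    positivity
  have hac : a < c := by rw [ha, hc]; nlinarith
  have hcd : c < d := by rw [hc, hd]; nlinarith
  have hdx : d ≤ x := hx
  -- integrability pieces
  have int1 : IntervalIntegrable (fun s => (x - s) ^ (lam - 1) * hatDeriv h j s)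
      volume 0 a := by
    refine (_root_.intervalIntegrable_const (c := (0:ℝ))).congr_ae ?_
    filter_upwards [self_mem_ae_restrict (measurableSet_uIoc)] with s hs
    rw [Set.uIoc_of_le h0a] at hs
    rw [hat_zero_of_le hh hs.2, mul_zero]
  have int2 : IntervalIntegrable (fun s => (x - s) ^ (lam - 1) * hatDeriv h j s)
      volume a c := by
    refine ((ker_integrable hlam x a c).mul_const (1/h)).congr_ae ?_
    filter_upwards [self_mem_ae_restrict (measurableSet_uIoc), ae_restrict_of_ae (ae_ne' c)]
      with s hs hsc
    rw [Set.uIoc_of_le hac.le] at hs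
    have : hatDeriv h j s = 1/h := by
      unfold hatDeriv
      rw [if_pos ⟨hs.1, lt_of_le_of_ne hs.2 hsc⟩]
    rw [this]
  have int3 : IntervalIntegrable (fun s => (x - s) ^ (lam - 1) * hatDeriv h j s)
      volume c d := by
    refine ((ker_integrable hlam x c d).mul_const (-1/h)).congr_ae ?_
    filter_upwards [self_mem_ae_restrict (measurableSet_uIoc), ae_restrict_of_ae (ae_ne' d)]
      with s hs hsd
    rw [Set.uIoc_of_le hcd.le] at hs
    have : hatDeriv h j s = -1/h := by
      unfold hatDeriv
      rw [if_neg (by push_neg; intro _; linarith [hs.1]),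
          if_pos ⟨hs.1, lt_of_le_of_ne hs.2 hsd⟩]
    rw [this]
  have int4 : IntervalIntegrable (fun s => (x - s) ^ (lam - 1) * hatDeriv h j s)
      volume d x := by
    refine (_root_.intervalIntegrable_const (c := (0:ℝ))).congr_ae ?_
    filter_upwards [self_mem_ae_restrict (measurableSet_uIoc)] with s hs
    rw [Set.uIoc_of_le hdx] at hs
    rw [hat_zero_of_ge hh hs.1.le, mul_zero]
  -- split
  have split : ∫ s in (0:ℝ)..x, (x - s) ^ (lam - 1) * hatDeriv h j s
      = (∫ s in (0:ℝ)..a, (x - s) ^ (lam - 1) * hatDeriv h j s)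
        + (∫ s in a..c, (x - s) ^ (lam - 1) * hatDeriv h j s)
        + (∫ s in c..d, (x - s) ^ (lam - 1) * hatDeriv h j s)
        + (∫ s in d..x, (x - s) ^ (lam - 1) * hatDeriv h j s) := by
    rw [integral_add_adjacent_intervals int1 int2,
        integral_add_adjacent_intervals (int1.trans int2) int3,
        integral_add_adjacent_intervals ((int1.trans int2).trans int3) int4]
  -- values
  have v1 : (∫ s in (0:ℝ)..a, (x - s) ^ (lam - 1) * hatDeriv h j s) = 0 := by
    have heq : (∫ s in (0:ℝ)..a, (x - s) ^ (lam - 1) * hatDeriv h j s)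
        = ∫ _ in (0:ℝ)..a, (0:ℝ) := by
      refine integral_congr fun s hs => ?_
      rw [Set.uIcc_of_le h0a] at hs
      rw [hat_zero_of_le hh hs.2, mul_zero]
    simp [heq]
  have v4 : (∫ s in d..x, (x - s) ^ (lam - 1) * hatDeriv h j s) = 0 := by
    have heq : (∫ s in d..x, (x - s) ^ (lam - 1) * hatDeriv h j s)
        = ∫ _ in d..x, (0:ℝ) := by
      refine integral_congr fun s hs => ?_
      rw [Set.uIcc_of_le hdx] at hs
      rw [hat_zero_of_ge hh hs.1, mul_zero]
    simp [heq]
  have v2 : (∫ s in a..c, (x - s) ^ (lam - 1) * hatDeriv h j s)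
      = (1/h) * (((x - a) ^ lam - (x - c) ^ lam) / lam) := by
    rw [← ker_int lam hlam x a c, ← intervalIntegral.integral_const_mul]
    refine integral_congr_ae ?_
    filter_upwards [ae_ne' c] with s hsc hs
    rw [Set.uIoc_of_le hac.le] at hs
    have : hatDeriv h j s = 1/h := by
      unfold hatDeriv
      rw [if_pos ⟨hs.1, lt_of_le_of_ne hs.2 hsc⟩]
    rw [this]; ring
  have v3 : (∫ s in c..d, (x - s) ^ (lam - 1) * hatDeriv h j s)
      = (-1/h) * (((x - c) ^ lam - (x - d) ^ lam) / lam) := by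
    rw [← ker_int lam hlam x c d, ← intervalIntegral.integral_const_mul]
    refine integral_congr_ae ?_
    filter_upwards [ae_ne' d] with s hsd hs
    rw [Set.uIoc_of_le hcd.le] at hs
    have : hatDeriv h j s = -1/h := by
      unfold hatDeriv
      rw [if_neg (by push_neg; intro _; linarith [hs.1]),
          if_pos ⟨hs.1, lt_of_le_of_ne hs.2 hsd⟩]
    rw [this]; ring
  rw [split, v1, v2, v3, v4]
  ring

lemma right_zero (lam h : ℝ) (hh : 0 < h) (j : ℕ) (x : ℝ)
    (hx : ((j:ℝ)+1)*h ≤ x) (hx1 : x ≤ 1) :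
    ∫ s in x..(1:ℝ), (s - x) ^ (lam - 1) * hatDeriv h j s = 0 := by
  have heq : (∫ s in x..(1:ℝ), (s - x) ^ (lam - 1) * hatDeriv h j s)
      = ∫ _ in x..(1:ℝ), (0:ℝ) := by
    refine integral_congr fun s hs => ?_
    rw [Set.uIcc_of_le hx1] at hs
    rw [hat_zero_of_ge hh (le_trans hx hs.1), mul_zero]
  simp [heq]

/-- Strictly lower-triangular entries of the stiffness matrix; in particular
the right fractional integral contributes nothing to these entries. -/
theorem stiffness_lower_triangular
    (lam gam b : ℝ) (hlam0 : 0 < lam) (hlam1 : lam < 1)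
    (hgam : gam ∈ Set.Icc (0:ℝ) 1) (hb : 0 < b)
    (I : ℕ) (hI : 2 ≤ I) (h : ℝ) (hh : h = 1 / (I : ℝ))
    (i j : ℕ) (hi1 : 3 ≤ i) (hi2 : i ≤ I - 1) (hj1 : 1 ≤ j) (hj2 : j ≤ i - 2) :
    stiff lam gam b h i j
      = (b * gam * h ^ (lam - 1) / Real.Gamma (lam + 1))
        * ((((i : ℝ) - (j : ℝ) + 1 / 2) ^ lam
              - 2 * ((i : ℝ) - (j : ℝ) - 1 / 2) ^ lam
              + ((i : ℝ) - (j : ℝ) - 3 / 2) ^ lam)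
          - (((i : ℝ) - (j : ℝ) + 3 / 2) ^ lam
              - 2 * ((i : ℝ) - (j : ℝ) + 1 / 2) ^ lam
              + ((i : ℝ) - (j : ℝ) - 1 / 2) ^ lam)) := by
  have hI0 : (0:ℝ) < I := by positivity
  have hh0 : 0 < h := by rw [hh]; positivity
  have hji : j + 2 ≤ i := by omega
  have hiI : i + 1 ≤ I := by omega
  have hjiR : (j:ℝ) + 2 ≤ (i:ℝ) := by exact_mod_cast hji
  have hiIR : (i:ℝ) + 1 ≤ (I:ℝ) := by exact_mod_cast hiI
  have hx1 : ((j:ℝ)+1)*h ≤ ((i:ℝ) - 1/2) * h := by nlinarith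
  have hx2 : ((j:ℝ)+1)*h ≤ ((i:ℝ) + 1/2) * h := by nlinarith
  have hx1le : ((i:ℝ) - 1/2) * h ≤ 1 := by
    rw [hh, mul_one_div, div_le_one hI0]; nlinarith
  have hx2le : ((i:ℝ) + 1/2) * h ≤ 1 := by
    rw [hh, mul_one_div, div_le_one hI0]; nlinarith
  have hGamma : 0 < Real.Gamma lam := Real.Gamma_pos_of_pos hlam0
  unfold stiff leftFracInt rightFracInt
  rw [right_zero lam h hh0 j _ hx1 hx1le, right_zero lam h hh0 j _ hx2 hx2le,
      left_val lam h hlam0 hh0 j hj1 _ hx1, left_val lam h hlam0 hh0 j hj1 _ hx2]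
  have E : ∀ m : ℝ, 0 ≤ m → (m*h) ^ lam = m ^ lam * h ^ lam :=
    fun m hm => Real.mul_rpow hm hh0.le
  rw [show ((i:ℝ) - 1/2) * h - ((j:ℝ)-1)*h = ((i:ℝ) - (j:ℝ) + 1/2)*h from by ring,
      show ((i:ℝ) - 1/2) * h - (j:ℝ)*h = ((i:ℝ) - (j:ℝ) - 1/2)*h from by ring,
      show ((i:ℝ) - 1/2) * h - ((j:ℝ)+1)*h = ((i:ℝ) - (j:ℝ) - 3/2)*h from by ring,
      show ((i:ℝ) + 1/2) * h - ((j:ℝ)-1)*h = ((i:ℝ) - (j:ℝ) + 3/2)*h from by ring,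
      show ((i:ℝ) + 1/2) * h - (j:ℝ)*h = ((i:ℝ) - (j:ℝ) + 1/2)*h from by ring,
      show ((i:ℝ) + 1/2) * h - ((j:ℝ)+1)*h = ((i:ℝ) - (j:ℝ) - 1/2)*h from by ring,
      E _ (by linarith), E _ (by linarith), E _ (by linarith),
      E _ (by linarith)]
  rw [Real.Gamma_add_one (ne_of_gt hlam0),
      show lam - 1 = lam + (-1) from by ring, Real.rpow_add hh0,
      Real.rpow_neg_one]
  field_simp
  ring
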